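/- arXiv:1910.13863 — 2 statements merged into one kernel-verified Lean document; each statement's English description precedes it below -/
import Mathlib

section
/- Let (A,∘,α,β) be a BiHom-pre-Lie superalgebra with α,β bijective, let (V,l,r,α_V,β_V) be an A-bimodule with α_V,β_V bijective, and let T: V → A be a super O-operator of weight zero associated to (V,l,r,α_V,β_V). Then T is a super O-operator of weight zero of the sub-adjacent BiHom-Lie superalgebra (A,[·,·]_C,α,β) associated to the representation ρ = l − r, i.e. [T(u),T(v)]_C = T((l−r)(T(u))v − (−1)^{|u||v|}(l−r)(T(α_V⁻¹β_V(v)))(α_Vβ_V⁻¹(u))) for all homogeneous u,v ∈ V, where [x,y]_C = x∘y − (−1)^{|x||y|}(α⁻¹β(y))∘(αβ⁻¹(x)). -/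
/-- If a linear automorphism preserves each graded piece of an internal direct sum,
so does its inverse. -/
lemma aux_symm_mem {K V : Type} [Field K] [AddCommGroup V] [Module K V]
    (𝒱 : ZMod 2 → Submodule K V) (hV : DirectSum.IsInternal 𝒱)
    (e : V ≃ₗ[K] V) (he : ∀ k : ZMod 2, ∀ v ∈ 𝒱 k, e v ∈ 𝒱 k) :
    ∀ k : ZMod 2, ∀ v ∈ 𝒱 k, e.symm v ∈ 𝒱 k := by
  intro k v hv
  set W : Submodule K V := ⨆ (j) (_ : j ≠ k), 𝒱 j with hW
  have hdis : Disjoint (𝒱 k) W := hV.submodule_iSupIndep k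
  have htop : 𝒱 k ⊔ W = ⊤ := by
    rw [eq_top_iff, ← hV.submodule_iSup_eq_top]
    apply iSup_le; intro i
    by_cases h : i = k
    · subst h; exact le_sup_left
    · exact le_trans (le_biSup 𝒱 h) le_sup_right
  have hmapW : ∀ x ∈ W, e x ∈ W := by
    have hle : W ≤ Submodule.comap (e : V →ₗ[K] V) W := by
      apply iSup_le; intro j; apply iSup_le; intro hj
      intro x hx
      exact Submodule.mem_comap.mpr (le_biSup 𝒱 hj (he j x hx))
    intro x hx; exact hle hx
  obtain ⟨a, ha, b, hb, hab⟩ :=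
    Submodule.mem_sup.mp (htop ▸ Submodule.mem_top : e.symm v ∈ 𝒱 k ⊔ W)
  have hv2 : e a + e b = v := by rw [← map_add, hab, e.apply_symm_apply]
  have heb : e b = v - e a := eq_sub_of_add_eq' hv2
  have hebk : e b ∈ 𝒱 k := heb ▸ sub_mem hv (he k a ha)
  have hz : e b = 0 := Submodule.disjoint_def.mp hdis (e b) hebk (hmapW b hb)
  have hb0 : b = 0 := by rw [← e.symm_apply_apply b, hz, map_zero]
  rw [← hab, hb0, add_zero]
  exact ha


/-!
STATEMENT 3: If `T` is a super O-operator of weight zero on a BiHom-pre-Lie superalgebra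
`(A,∘,α,β)` associated to a bimodule `(V,l,r,α_V,β_V)` (everything bijective), then `T` is a
super O-operator of weight zero of the sub-adjacent BiHom-Lie superalgebra `(A,[·,·]_C,α,β)`
associated to the representation `ρ = l − r`.
-/
theorem statement3
    (K : Type) [Field K] [CharZero K]
    (A : Type) [AddCommGroup A] [Module K A]
    (𝒜 : ZMod 2 → Submodule K A)
    (hA : DirectSum.IsInternal 𝒜)
    (c : A →ₗ[K] A →ₗ[K] A)
    (α β : A ≃ₗ[K] A)
    (hcomm : ∀ a, α (β a) = β (α a))
    (hαe : ∀ i : ZMod 2, ∀ a ∈ 𝒜 i, α a ∈ 𝒜 i)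
    (hβe : ∀ i : ZMod 2, ∀ a ∈ 𝒜 i, β a ∈ 𝒜 i)
    (hce : ∀ i j : ZMod 2, ∀ x ∈ 𝒜 i, ∀ y ∈ 𝒜 j, c x y ∈ 𝒜 (i + j))
    (hαm : ∀ a b : A, α (c a b) = c (α a) (α b))
    (hβm : ∀ a b : A, β (c a b) = c (β a) (β b))
    (hpre : ∀ i j k : ZMod 2, ∀ x ∈ 𝒜 i, ∀ y ∈ 𝒜 j, ∀ z ∈ 𝒜 k,
      c (c (β x) (α y)) (β z) - c (α (β x)) (c (α y) z)
        = ((-1 : K) ^ (i.val * j.val)) •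
            (c (c (β y) (α x)) (β z) - c (α (β y)) (c (α x) z)))
    -- the A-bimodule V
    (V : Type) [AddCommGroup V] [Module K V]
    (𝒱 : ZMod 2 → Submodule K V)
    (hV : DirectSum.IsInternal 𝒱)
    (l r : A →ₗ[K] V →ₗ[K] V)
    (αV βV : V ≃ₗ[K] V)
    (hVcomm : ∀ v, αV (βV v) = βV (αV v))
    (hαVe : ∀ k : ZMod 2, ∀ v ∈ 𝒱 k, αV v ∈ 𝒱 k)
    (hβVe : ∀ k : ZMod 2, ∀ v ∈ 𝒱 k, βV v ∈ 𝒱 k)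
    (hle : ∀ i k : ZMod 2, ∀ x ∈ 𝒜 i, ∀ v ∈ 𝒱 k, l x v ∈ 𝒱 (i + k))
    (hre : ∀ i k : ZMod 2, ∀ x ∈ 𝒜 i, ∀ v ∈ 𝒱 k, r x v ∈ 𝒱 (i + k))
    (hlα : ∀ i k : ZMod 2, ∀ x ∈ 𝒜 i, ∀ v ∈ 𝒱 k, αV (l x v) = l (α x) (αV v))
    (hlβ : ∀ i k : ZMod 2, ∀ x ∈ 𝒜 i, ∀ v ∈ 𝒱 k, βV (l x v) = l (β x) (βV v))
    (hrα : ∀ i k : ZMod 2, ∀ x ∈ 𝒜 i, ∀ v ∈ 𝒱 k, αV (r x v) = r (α x) (αV v))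
    (hrβ : ∀ i k : ZMod 2, ∀ x ∈ 𝒜 i, ∀ v ∈ 𝒱 k, βV (r x v) = r (β x) (βV v))
    (hbl : ∀ i j k : ZMod 2, ∀ x ∈ 𝒜 i, ∀ y ∈ 𝒜 j, ∀ u ∈ 𝒱 k,
      l (c (β x) (α y)) (βV u) - l (α (β x)) (l (α y) u)
        = ((-1 : K) ^ (i.val * j.val)) •
            (l (c (β y) (α x)) (βV u) - l (α (β y)) (l (α x) u)))
    (hbr' : ∀ i j k : ZMod 2, ∀ x ∈ 𝒜 i, ∀ y ∈ 𝒜 j, ∀ u ∈ 𝒱 k,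
      r (β x) (r (α y) (βV u)) - r (c (α y) x) (αV (βV u))
        = ((-1 : K) ^ (j.val * k.val)) •
            (r (β x) (l (β y) (αV u)) - l (α (β y)) (r x (αV u))))
    -- T is a super O-operator of weight zero associated to (V,l,r,α_V,β_V)
    (T : V →ₗ[K] A)
    (hTe : ∀ k : ZMod 2, ∀ v ∈ 𝒱 k, T v ∈ 𝒜 k)
    (hTα : ∀ v, T (αV v) = α (T v))
    (hTβ : ∀ v, T (βV v) = β (T v))
    (hT : ∀ i j : ZMod 2, ∀ u ∈ 𝒱 i, ∀ v ∈ 𝒱 j,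
      c (T u) (T v)
        = T (l (T u) v
            + ((-1 : K) ^ (i.val * j.val)) •
                r (T (αV.symm (βV v))) (αV (βV.symm u))))
    -- the sub-adjacent bracket
    (br : ZMod 2 → ZMod 2 → A → A → A)
    (hbr : ∀ i j x y, br i j x y
      = c x y - ((-1 : K) ^ (i.val * j.val)) • c (α.symm (β y)) (α (β.symm x))) :
    -- T is a super O-operator of the sub-adjacent BiHom-Lie superalgebra associated
    -- to the representation ρ = l − r
    ∀ i j : ZMod 2, ∀ u ∈ 𝒱 i, ∀ v ∈ 𝒱 j,
      br i j (T u) (T v)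
        = T ((l (T u) v - r (T u) v)
            - ((-1 : K) ^ (i.val * j.val)) •
                (l (T (αV.symm (βV v))) (αV (βV.symm u))
                  - r (T (αV.symm (βV v))) (αV (βV.symm u)))) := by
  intro i j u hu v hv
  set u' := αV.symm (βV v) with hu'
  set v' := αV (βV.symm u) with hv'
  have hαVs := aux_symm_mem 𝒱 hV αV hαVe
  have hβVs := aux_symm_mem 𝒱 hV βV hβVe
  have hu'm : u' ∈ 𝒱 j := hαVs j _ (hβVe j v hv)
  have hv'm : v' ∈ 𝒱 i := hαVe i _ (hβVs i u hu)
  have hTαs : ∀ w, T (αV.symm w) = α.symm (T w) := by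
    intro w
    apply α.injective
    rw [← hTα, LinearEquiv.apply_symm_apply, LinearEquiv.apply_symm_apply]
  have hTβs : ∀ w, T (βV.symm w) = β.symm (T w) := by
    intro w
    apply β.injective
    rw [← hTβ, LinearEquiv.apply_symm_apply, LinearEquiv.apply_symm_apply]
  have hTu' : T u' = α.symm (β (T v)) := by rw [hu', hTαs, hTβ]
  have hTv' : T v' = α (β.symm (T u)) := by rw [hv', hTα, hTβs]
  have e1 : αV.symm (βV v') = u := by
    rw [hv']
    apply αV.injective
    rw [LinearEquiv.apply_symm_apply, ← hVcomm, LinearEquiv.apply_symm_apply]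
  have e2 : αV (βV.symm u') = v := by
    rw [hu']
    apply βV.injective
    rw [← hVcomm, LinearEquiv.apply_symm_apply, LinearEquiv.apply_symm_apply]
  have key1 := hT i j u hu v hv
  have key2 := hT j i u' hu'm v' hv'm
  rw [e1, e2] at key2
  have hS' : ((-1 : K) ^ (j.val * i.val)) = ((-1 : K) ^ (i.val * j.val)) := by
    rw [mul_comm]
  rw [hS'] at key2
  have hSS : ((-1 : K) ^ (i.val * j.val)) * ((-1 : K) ^ (i.val * j.val)) = 1 := by
    rw [← pow_add, ← two_mul, pow_mul]
    norm_num
  rw [← hu', ← hv'] at key1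
  rw [hbr, ← hTu', ← hTv', key1, key2]
  simp only [map_add, map_sub, map_smul, smul_add, smul_sub, smul_smul, hSS, one_smul]
  abel
end

section
/- Let R₁ and R₂ be Rota-Baxter operators of weight zero on a BiHom-pre-Lie superalgebra (A,∘,α,β) with α,β bijective, and suppose R₁∘R₂ = R₂∘R₁. Then R₂ is a Rota-Baxter operator of weight zero on the BiHom-L-dendriform superalgebra (A,▷,◁,α,β) defined by x▷y = R₁(x)∘y and x◁y = −(−1)^{|x||y|}(α⁻¹β(y))∘R₁(αβ⁻¹(x)); that is, R₂(x)▷R₂(y) = R₂(R₂(x)▷y + x▷R₂(y)) and R₂(x)◁R₂(y) = R₂(R₂(x)◁y + x◁R₂(y)) for all homogeneous x,y. -/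
lemma symm_mem_aux {K A : Type} [Field K] [AddCommGroup A] [Module K A]
    (𝒜 : ZMod 2 → Submodule K A) (hA : DirectSum.IsInternal 𝒜)
    (e : A ≃ₗ[K] A) (he : ∀ i : ZMod 2, ∀ a ∈ 𝒜 i, e a ∈ 𝒜 i) :
    ∀ i : ZMod 2, ∀ a ∈ 𝒜 i, e.symm a ∈ 𝒜 i := by
  classical
  letI := hA.chooseDecomposition
  have key : ∀ (x : A) (j : ZMod 2),
      (DirectSum.decompose 𝒜 (e x) j : A) = e (DirectSum.decompose 𝒜 x j : A) := by
    intro x j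
    conv_lhs => rw [← DirectSum.sum_support_decompose 𝒜 x, map_sum]
    rw [DirectSum.decompose_sum]
    rw [DFinsupp.finset_sum_apply]
    have hterm : ∀ k ∈ (DirectSum.decompose 𝒜 x).support,
        (DirectSum.decompose 𝒜 (e (DirectSum.decompose 𝒜 x k : A))) j
          = if k = j then (⟨e (DirectSum.decompose 𝒜 x j : A),
              he j _ (DirectSum.decompose 𝒜 x j).2⟩ : 𝒜 j) else 0 := by
      intro k _
      rw [DirectSum.decompose_of_mem 𝒜 (he k _ (DirectSum.decompose 𝒜 x k).2)]
      by_cases h : k = j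
      · subst h; simp [DirectSum.of_eq_same]
      · simp [DirectSum.of_eq_of_ne _ _ _ (Ne.symm h), h]
    rw [Finset.sum_congr rfl hterm]
    rw [Finset.sum_ite_eq' _ j _]
    by_cases hj : j ∈ (DirectSum.decompose 𝒜 x).support
    · simp [hj]
    · simp [hj, DFinsupp.notMem_support_iff.mp hj]
  intro i a ha
  set x := e.symm a with hxdef
  have hex : e x = a := e.apply_symm_apply a
  have hcomp : ∀ j : ZMod 2, j ≠ i → (DirectSum.decompose 𝒜 x j : A) = 0 := by
    intro j hj
    have h1 : (DirectSum.decompose 𝒜 (e x) j : A) = 0 := by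
      rw [hex, DirectSum.decompose_of_mem_ne 𝒜 ha (Ne.symm hj)]
    rw [key] at h1
    exact e.injective (by simpa using h1)
  have := DirectSum.sum_support_decompose 𝒜 x
  rw [← this]
  refine Submodule.sum_mem _ fun j hj => ?_
  have hji : j = i := by
    by_contra h
    exact DFinsupp.mem_support_iff.mp hj (by
      have := hcomp j h
      exact Subtype.ext this)
  subst hji
  exact (DirectSum.decompose 𝒜 x j).2



/-!
STATEMENT 17: If `R₁, R₂` are commuting Rota-Baxter operators of weight zero on a
BiHom-pre-Lie superalgebra `(A,∘,α,β)` with `α, β` bijective, then `R₂` is a Rota-Baxter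
operator of weight zero on the BiHom-L-dendriform superalgebra `(A,▷,◁,α,β)` defined by
`x▷y = R₁(x)∘y` and `x◁y = −(−1)^{|x||y|}(α⁻¹β(y))∘R₁(αβ⁻¹(x))`.
-/
theorem statement17
    (K : Type) [Field K] [CharZero K]
    (A : Type) [AddCommGroup A] [Module K A]
    (𝒜 : ZMod 2 → Submodule K A)
    (hA : DirectSum.IsInternal 𝒜)
    (c : A →ₗ[K] A →ₗ[K] A)
    (α β : A ≃ₗ[K] A)
    (hcomm : ∀ a, α (β a) = β (α a))
    (hαe : ∀ i : ZMod 2, ∀ a ∈ 𝒜 i, α a ∈ 𝒜 i)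
    (hβe : ∀ i : ZMod 2, ∀ a ∈ 𝒜 i, β a ∈ 𝒜 i)
    (hce : ∀ i j : ZMod 2, ∀ x ∈ 𝒜 i, ∀ y ∈ 𝒜 j, c x y ∈ 𝒜 (i + j))
    (hαm : ∀ a b : A, α (c a b) = c (α a) (α b))
    (hβm : ∀ a b : A, β (c a b) = c (β a) (β b))
    (hpre : ∀ i j k : ZMod 2, ∀ x ∈ 𝒜 i, ∀ y ∈ 𝒜 j, ∀ z ∈ 𝒜 k,
      c (c (β x) (α y)) (β z) - c (α (β x)) (c (α y) z)
        = ((-1 : K) ^ (i.val * j.val)) •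
            (c (c (β y) (α x)) (β z) - c (α (β y)) (c (α x) z)))
    -- R₁ and R₂ are commuting Rota-Baxter operators of weight zero
    (R₁ R₂ : A →ₗ[K] A)
    (hR₁e : ∀ i : ZMod 2, ∀ a ∈ 𝒜 i, R₁ a ∈ 𝒜 i)
    (hR₂e : ∀ i : ZMod 2, ∀ a ∈ 𝒜 i, R₂ a ∈ 𝒜 i)
    (hR₁α : ∀ a, R₁ (α a) = α (R₁ a))
    (hR₁β : ∀ a, R₁ (β a) = β (R₁ a))
    (hR₂α : ∀ a, R₂ (α a) = α (R₂ a))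
    (hR₂β : ∀ a, R₂ (β a) = β (R₂ a))
    (hR₁B : ∀ i j : ZMod 2, ∀ x ∈ 𝒜 i, ∀ y ∈ 𝒜 j,
      c (R₁ x) (R₁ y) = R₁ (c (R₁ x) y + c x (R₁ y)))
    (hR₂B : ∀ i j : ZMod 2, ∀ x ∈ 𝒜 i, ∀ y ∈ 𝒜 j,
      c (R₂ x) (R₂ y) = R₂ (c (R₂ x) y + c x (R₂ y)))
    (hRR : ∀ a, R₁ (R₂ a) = R₂ (R₁ a))
    -- the BiHom-L-dendriform products defined from R₁
    (dr : A → A → A) (hdr : ∀ x y, dr x y = c (R₁ x) y)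
    (dl : ZMod 2 → ZMod 2 → A → A → A)
    (hdl : ∀ i j x y, dl i j x y
      = -(((-1 : K) ^ (i.val * j.val)) • c (α.symm (β y)) (R₁ (α (β.symm x))))) :
    -- R₂ is a Rota-Baxter operator of weight zero on `(A,▷,◁,α,β)`:
    (∀ i j : ZMod 2, ∀ x ∈ 𝒜 i, ∀ y ∈ 𝒜 j,
      dr (R₂ x) (R₂ y) = R₂ (dr (R₂ x) y + dr x (R₂ y)))
    ∧ (∀ i j : ZMod 2, ∀ x ∈ 𝒜 i, ∀ y ∈ 𝒜 j,
      dl i j (R₂ x) (R₂ y) = R₂ (dl i j (R₂ x) y + dl i j x (R₂ y))) := by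

  have hαs := symm_mem_aux 𝒜 hA α hαe
  have hβs := symm_mem_aux 𝒜 hA β hβe
  have hR₂αs : ∀ a, R₂ (α.symm a) = α.symm (R₂ a) := fun a =>
    α.injective (by rw [← hR₂α, α.apply_symm_apply, α.apply_symm_apply])
  have hR₂βs : ∀ a, R₂ (β.symm a) = β.symm (R₂ a) := fun a =>
    β.injective (by rw [← hR₂β, β.apply_symm_apply, β.apply_symm_apply])
  constructor
  · intro i j x hx y hy
    rw [hdr, hdr, hdr, hRR x]
    exact hR₂B i j (R₁ x) (hR₁e i x hx) y hy
  · intro i j x hx y hy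
    rw [hdl, hdl, hdl]
    have hu : α.symm (β y) ∈ 𝒜 j := hαs j _ (hβe j y hy)
    have hv : α (β.symm x) ∈ 𝒜 i := hαe i _ (hβs i x hx)
    rw [← hR₂β y, ← hR₂αs, ← hR₂βs x, ← hR₂α, hRR,
      hR₂B j i _ hu (R₁ (α (β.symm x))) (hR₁e i _ hv)]
    simp only [map_add, map_neg, map_smul]
    rw [smul_add]; abel
end
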